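/- arXiv:1008.0116 — 4 statements merged into one kernel-verified Lean document; each statement's English description precedes it below -/
import Mathlib

section
/- For the two-sided exponential mixture with mgf M(w) = pθ₁/(θ₁−w) + (1−p)θ₂/(θ₂+w) and for u ∈ (0,1), the number w_u = (θ₁ − θ₂ + u((1−p)θ₂ − pθ₁) + √((θ₁−θ₂+u((1−p)θ₂−pθ₁))² + 4(1−u)θ₁θ₂))/2 satisfies M(w_u) = 1/u and 0 < w_u < θ₁. -/
open Real

/-- the explicit root `w_u` satisfies `M(w_u) = 1/u` and `0 < w_u < θ₁`. -/
theorem stmt_7 (p θ₁ θ₂ u : ℝ) (hθ₁ : 0 < θ₁) (hθ₂ : 0 < θ₂)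
    (hp : p ∈ Set.Ioo (0 : ℝ) 1) (hu : u ∈ Set.Ioo (0 : ℝ) 1)
    (wu : ℝ)
    (hwu : wu = (θ₁ - θ₂ + u * ((1 - p) * θ₂ - p * θ₁)
      + Real.sqrt ((θ₁ - θ₂ + u * ((1 - p) * θ₂ - p * θ₁)) ^ 2
          + 4 * (1 - u) * θ₁ * θ₂)) / 2) :
    p * θ₁ / (θ₁ - wu) + (1 - p) * θ₂ / (θ₂ + wu) = 1 / u
      ∧ 0 < wu ∧ wu < θ₁ := by
  obtain ⟨hp0, hp1⟩ := hp
  obtain ⟨hu0, hu1⟩ := hu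
  obtain ⟨b, hb⟩ : ∃ b : ℝ, b = θ₁ - θ₂ + u * ((1 - p) * θ₂ - p * θ₁) := ⟨_, rfl⟩
  rw [← hb] at hwu
  obtain ⟨s, hseq⟩ : ∃ s : ℝ, s = Real.sqrt (b ^ 2 + 4 * (1 - u) * θ₁ * θ₂) := ⟨_, rfl⟩
  rw [← hseq] at hwu
  have hD : 0 < b ^ 2 + 4 * (1 - u) * θ₁ * θ₂ := by
    nlinarith [sq_nonneg b, mul_pos (mul_pos (sub_pos.mpr hu1) hθ₁) hθ₂]
  have hsq : s ^ 2 = b ^ 2 + 4 * (1 - u) * θ₁ * θ₂ := by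
    rw [hseq]; exact Real.sq_sqrt hD.le
  have hsnn : 0 ≤ s := hseq ▸ Real.sqrt_nonneg _
  have hquad : wu ^ 2 - b * wu - (1 - u) * θ₁ * θ₂ = 0 := by
    rw [hwu]; nlinarith [hsq]
  have hwupos : 0 < wu := by
    rw [hwu]
    nlinarith [hsq, hsnn, sq_nonneg (s + b), sq_nonneg (s - b),
      mul_pos (mul_pos (sub_pos.mpr hu1) hθ₁) hθ₂]
  have hwult : wu < θ₁ := by
    rw [hwu]
    have hkey : (2 * θ₁ - b) ^ 2 - s ^ 2 = 4 * θ₁ * (u * p * (θ₁ + θ₂)) := by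
      rw [hsq, hb]; ring
    have hpos : 0 < 2 * θ₁ - b := by
      rw [hb]; nlinarith [mul_pos (mul_pos hu0 hp0) (add_pos hθ₁ hθ₂)]
    have h2 : s < 2 * θ₁ - b := by
      nlinarith [mul_pos (mul_pos hu0 hp0) (add_pos hθ₁ hθ₂), mul_pos hθ₁ (mul_pos (mul_pos hu0 hp0) (add_pos hθ₁ hθ₂))]
    linarith
  refine ⟨?_, hwupos, hwult⟩
  have h1 : θ₁ - wu ≠ 0 := by linarith
  have h2 : θ₂ + wu ≠ 0 := by positivity
  have h3 : u ≠ 0 := ne_of_gt hu0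
  field_simp
  nlinarith [hquad, hb, mul_self_nonneg u]
end

section
/- The function u ↦ w_u defined by w_u = (θ₁ − θ₂ + u((1−p)θ₂−pθ₁) + √((θ₁−θ₂+u((1−p)θ₂−pθ₁))² + 4(1−u)θ₁θ₂))/2 is strictly decreasing on [0,1], with w_0 = θ₁ and w_1 = max{0, (1−p)θ₁ − pθ₂}. -/
open Real

/-- `u ↦ w_u` is strictly decreasing on `[0,1]`, with `w_0 = θ₁`
and `w_1 = max {0, (1-p)θ₁ - pθ₂}`. -/
theorem stmt_8 (p θ₁ θ₂ : ℝ) (hθ₁ : 0 < θ₁) (hθ₂ : 0 < θ₂)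
    (hp : p ∈ Set.Ioo (0 : ℝ) 1)
    (w : ℝ → ℝ)
    (hw : ∀ u, w u = (θ₁ - θ₂ + u * ((1 - p) * θ₂ - p * θ₁)
      + Real.sqrt ((θ₁ - θ₂ + u * ((1 - p) * θ₂ - p * θ₁)) ^ 2
          + 4 * (1 - u) * θ₁ * θ₂)) / 2) :
    StrictAntiOn w (Set.Icc 0 1)
      ∧ w 0 = θ₁ ∧ w 1 = max 0 ((1 - p) * θ₁ - p * θ₂) := by
  obtain ⟨hp0, hp1⟩ := hp
  have hwfun : w = fun u => (θ₁ - θ₂ + u * ((1 - p) * θ₂ - p * θ₁)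
      + Real.sqrt ((θ₁ - θ₂ + u * ((1 - p) * θ₂ - p * θ₁)) ^ 2
          + 4 * (1 - u) * θ₁ * θ₂)) / 2 := funext hw
  set c : ℝ := (1 - p) * θ₂ - p * θ₁ with hc
  refine ⟨?_, ?_, ?_⟩
  · apply strictAntiOn_of_deriv_neg (convex_Icc 0 1)
    · rw [hwfun]
      fun_prop
    · intro u hu
      rw [interior_Icc] at hu
      obtain ⟨hu0, hu1⟩ := hu
      have h1u : (0:ℝ) < 1 - u := by linarith
      set b : ℝ := θ₁ - θ₂ + u * c with hb
      have hg : (0:ℝ) < b ^ 2 + 4 * (1 - u) * θ₁ * θ₂ := by positivity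
      set s : ℝ := Real.sqrt (b ^ 2 + 4 * (1 - u) * θ₁ * θ₂) with hs
      have hspos : 0 < s := Real.sqrt_pos.mpr hg
      have hssq : s ^ 2 = b ^ 2 + 4 * (1 - u) * θ₁ * θ₂ := Real.sq_sqrt hg.le
      -- derivative computation
      have hb' : HasDerivAt (fun x : ℝ => θ₁ - θ₂ + x * c) c u := by
        simpa using ((hasDerivAt_id u).mul_const c).const_add (θ₁ - θ₂)
      have hG : HasDerivAt
          (fun x : ℝ => (θ₁ - θ₂ + x * c) ^ 2 + 4 * (1 - x) * θ₁ * θ₂)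
          (2 * b * c - 4 * θ₁ * θ₂) u := by
        have h1 := hb'.pow 2
        have h2 : HasDerivAt (fun x : ℝ => 4 * (1 - x) * θ₁ * θ₂)
            (-(4 * θ₁ * θ₂)) u := by
          have := (((hasDerivAt_id u).const_sub 1).const_mul 4).mul_const θ₁
            |>.mul_const θ₂
          exact this.congr_deriv (by ring)
        have := h1.add h2
        exact this.congr_deriv (by push_cast; ring)
      have hsq' : HasDerivAt
          (fun x : ℝ => Real.sqrt ((θ₁ - θ₂ + x * c) ^ 2 + 4 * (1 - x) * θ₁ * θ₂))
          (1 / (2 * s) * (2 * b * c - 4 * θ₁ * θ₂)) u := by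
        exact (Real.hasDerivAt_sqrt hg.ne').comp u hG
      have hwd : HasDerivAt w
          ((c + 1 / (2 * s) * (2 * b * c - 4 * θ₁ * θ₂)) / 2) u := by
        rw [hwfun]
        exact (hb'.add hsq').div_const 2
      rw [hwd.deriv]
      -- show the derivative is negative
      have key : c * s + b * c < 2 * (θ₁ * θ₂) := by
        rcases le_or_gt c 0 with hcle | hcpos
        · have hsb : 0 < s + b := by
            nlinarith [hssq, hspos, mul_pos (mul_pos h1u hθ₁) hθ₂,
              sq_nonneg (s + b), mul_pos hspos hspos]
          nlinarith [mul_pos hθ₁ hθ₂]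
        · have hfac : (c + θ₁) * (c - θ₂) < 0 := by
            apply mul_neg_of_pos_of_neg
            · nlinarith
            · nlinarith
          have hcb : c * b < θ₁ * θ₂ := by
            nlinarith [mul_pos (mul_pos h1u hcpos) hcpos]
          have hrhs : 0 < 2 * (θ₁ * θ₂) - c * b := by
            nlinarith [mul_pos hθ₁ hθ₂]
          have hsq : (c * s) ^ 2 < (2 * (θ₁ * θ₂) - c * b) ^ 2 := by
            have hcs2 : (c * s) ^ 2 = c ^ 2 * (b ^ 2 + 4 * (1 - u) * θ₁ * θ₂) := by
              rw [mul_pow, hssq]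
            have hexp : (2 * (θ₁ * θ₂) - c * b) ^ 2
                - c ^ 2 * (b ^ 2 + 4 * (1 - u) * θ₁ * θ₂)
                = 4 * (θ₁ * θ₂) * (-((c + θ₁) * (c - θ₂))) := by
              rw [hb]; ring
            have hX : (0:ℝ) < -((c + θ₁) * (c - θ₂)) := by linarith
            have hpos := mul_pos (by positivity : (0:ℝ) < 4 * (θ₁ * θ₂)) hX
            linarith
          have := lt_of_pow_lt_pow_left₀ 2 hrhs.le hsq
          linarith
      have h2s : (0:ℝ) < 2 * s := by linarith
      have : 1 / (2 * s) * (2 * b * c - 4 * θ₁ * θ₂) < -c := by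
        rw [div_mul_eq_mul_div, one_mul, div_lt_iff₀ h2s]
        nlinarith
      linarith
  · rw [hw 0]
    have h1 : (θ₁ - θ₂ + 0 * c) ^ 2 + 4 * (1 - 0) * θ₁ * θ₂ = (θ₁ + θ₂) ^ 2 := by
      ring
    rw [h1, Real.sqrt_sq (by linarith)]
    ring
  · rw [hw 1]
    have h1 : (θ₁ - θ₂ + 1 * c) ^ 2 + 4 * (1 - 1) * θ₁ * θ₂
        = ((1 - p) * θ₁ - p * θ₂) ^ 2 := by
      rw [hc]; ring
    rw [h1, Real.sqrt_sq_eq_abs]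
    rcases le_or_gt 0 ((1 - p) * θ₁ - p * θ₂) with h | h
    · rw [abs_of_nonneg h, max_eq_right h, hc]
      ring
    · rw [abs_of_neg h, max_eq_left h.le, hc]
      ring
end

section
/- As w* → 0 (equivalently when (1−p)θ₁ = pθ₂), the boundary-crossing probability formula (1 − θ₂ e^{−w* a}/(w*+θ₂)) / (θ₁ e^{w* b}/(θ₁−w*) − θ₂ e^{−w* a}/(w*+θ₂)) tends to the limit (θ₁ + a θ₁θ₂)/(θ₁ + θ₂ + (a+b)θ₁θ₂). -/
open Real Filter Topology

/-- the limit of the boundary crossing probability as `w* → 0`. -/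
theorem stmt_13 (θ₁ θ₂ a b : ℝ) (hθ₁ : 0 < θ₁) (hθ₂ : 0 < θ₂)
    (ha : 0 < a) (hb : 0 < b) :
    Tendsto (fun w : ℝ =>
        (1 - θ₂ * Real.exp (-w * a) / (w + θ₂))
          / (θ₁ * Real.exp (w * b) / (θ₁ - w) - θ₂ * Real.exp (-w * a) / (w + θ₂)))
      (𝓝[≠] 0)
      (𝓝 ((θ₁ + a * θ₁ * θ₂) / (θ₁ + θ₂ + (a + b) * θ₁ * θ₂))) := by
  set F : ℝ → ℝ := fun w => 1 - θ₂ * Real.exp (-w * a) / (w + θ₂) with hFdef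
  set G : ℝ → ℝ := fun w => θ₁ * Real.exp (w * b) / (θ₁ - w)
      - θ₂ * Real.exp (-w * a) / (w + θ₂) with hGdef
  have h2 : (0:ℝ) + θ₂ ≠ 0 := by simpa using hθ₂.ne'
  have h1 : θ₁ - 0 ≠ 0 := by simpa using hθ₁.ne'
  have hexpA : HasDerivAt (fun w : ℝ => Real.exp (-w * a)) (-a) 0 := by
    have := (((hasDerivAt_id (0:ℝ)).neg).mul_const a).exp
    simpa using this
  have hexpB : HasDerivAt (fun w : ℝ => Real.exp (w * b)) b 0 := by
    have := ((hasDerivAt_id (0:ℝ)).mul_const b).exp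
    simpa using this
  have hg : HasDerivAt (fun w : ℝ => θ₂ * Real.exp (-w * a) / (w + θ₂))
      (-(1 + a * θ₂) / θ₂) 0 := by
    have := (hexpA.const_mul θ₂).div ((hasDerivAt_id (0:ℝ)).add_const θ₂) h2
    replace this : HasDerivAt (fun w : ℝ => θ₂ * Real.exp (-w * a) / (w + θ₂)) _ 0 := this
    convert this using 1
    simp only [id_eq, zero_add, neg_zero, zero_mul, Real.exp_zero]
    field_simp
    ring
  have hh : HasDerivAt (fun w : ℝ => θ₁ * Real.exp (w * b) / (θ₁ - w))
      ((1 + b * θ₁) / θ₁) 0 := by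
    have := (hexpB.const_mul θ₁).div ((hasDerivAt_id (0:ℝ)).const_sub θ₁) h1
    replace this : HasDerivAt (fun w : ℝ => θ₁ * Real.exp (w * b) / (θ₁ - w)) _ 0 := this
    convert this using 1
    simp only [id_eq, sub_zero, zero_mul, Real.exp_zero]
    field_simp
    ring
  have hF : HasDerivAt F ((1 + a * θ₂) / θ₂) 0 := by
    have := (hasDerivAt_const (0:ℝ) (1:ℝ)).sub hg
    replace this : HasDerivAt F _ 0 := this
    convert this using 1
    ring
  have hG : HasDerivAt G ((1 + b * θ₁) / θ₁ + (1 + a * θ₂) / θ₂) 0 := by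
    have := hh.sub hg
    replace this : HasDerivAt G _ 0 := this
    convert this using 1
    ring
  have hF0 : F 0 = 0 := by
    simp only [hFdef, neg_zero, zero_mul, Real.exp_zero, mul_one, zero_add]
    rw [div_self hθ₂.ne', sub_self]
  have hG0 : G 0 = 0 := by
    simp only [hGdef, neg_zero, zero_mul, Real.exp_zero, mul_one, sub_zero, zero_add]
    rw [div_self hθ₁.ne', div_self hθ₂.ne', sub_self]
  have hGd_pos : 0 < (1 + b * θ₁) / θ₁ + (1 + a * θ₂) / θ₂ := by positivity
  have hFt := hasDerivAt_iff_tendsto_slope.mp hF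
  have hGt := hasDerivAt_iff_tendsto_slope.mp hG
  have hdiv : Tendsto (fun w => slope F 0 w / slope G 0 w) (𝓝[≠] 0)
      (𝓝 (((1 + a * θ₂) / θ₂) / ((1 + b * θ₁) / θ₁ + (1 + a * θ₂) / θ₂))) :=
    hFt.div hGt hGd_pos.ne'
  have heq : (fun w => slope F 0 w / slope G 0 w)
      =ᶠ[𝓝[≠] 0] (fun w => F w / G w) := by
    filter_upwards [self_mem_nhdsWithin] with w hw
    have hw0 : w ≠ 0 := hw
    rw [slope_def_field, slope_def_field, hF0, hG0, sub_zero, sub_zero, sub_zero,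
      div_div_div_cancel_right₀ hw0]
  have : Tendsto (fun w => F w / G w) (𝓝[≠] 0)
      (𝓝 (((1 + a * θ₂) / θ₂) / ((1 + b * θ₁) / θ₁ + (1 + a * θ₂) / θ₂))) :=
    hdiv.congr' heq
  convert this using 2
  rw [div_eq_div_iff]
  · field_simp
    ring
  · positivity
  · positivity
end

section
/- Under the two-sided exponential mixture tilted at w_u (where M(w_u) = 1/u, u ∈ (0,1)), the mean step is strictly positive: Ẽ_{w_u}(Z) = pθ₁u/(θ₁−w_u)² − (1−p)θ₂u/(θ₂+w_u)² > 0. -/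
open MeasureTheory Real

open Set Filter in
lemma aux_Ioi (a : ℝ) (ha : 0 < a) :
    IntegrableOn (fun x : ℝ => x * Real.exp (-a * x)) (Set.Ioi 0) ∧
    ∫ x in Set.Ioi (0:ℝ), x * Real.exp (-a * x) = 1 / a ^ 2 := by
  set g : ℝ → ℝ := fun x =>
    -((1 / a) * (x * Real.exp (-a * x)) + (1 / a ^ 2) * Real.exp (-a * x)) with hg
  have hexp : ∀ x : ℝ, HasDerivAt (fun x : ℝ => Real.exp (-a * x))
      (-a * Real.exp (-a * x)) x := by
    intro x
    have h := ((hasDerivAt_id x).const_mul (-a)).exp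
    simpa [mul_comm] using h
  have hderiv : ∀ x ∈ Set.Ici (0:ℝ), HasDerivAt g (x * Real.exp (-a * x)) x := by
    intro x _
    have h1 : HasDerivAt (fun x : ℝ => x * Real.exp (-a * x))
        (1 * Real.exp (-a * x) + x * (-a * Real.exp (-a * x))) x :=
      (hasDerivAt_id x).mul (hexp x)
    have h2 := (((h1.const_mul (1/a)).add ((hexp x).const_mul (1/a^2))).neg)
    convert h2 using 1
    · rfl
    · rfl
    · rfl
    · field_simp
      ring
  have t1 : Tendsto (fun x : ℝ => x * Real.exp (-a * x)) atTop (nhds 0) := by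
    have := tendsto_rpow_mul_exp_neg_mul_atTop_nhds_zero 1 a ha
    simpa [Real.rpow_one] using this
  have t2 : Tendsto (fun x : ℝ => Real.exp (-a * x)) atTop (nhds 0) := by
    have := tendsto_rpow_mul_exp_neg_mul_atTop_nhds_zero 0 a ha
    simpa [Real.rpow_zero] using this
  have htend : Tendsto g atTop (nhds 0) := by
    have h := ((t1.const_mul (1/a)).add (t2.const_mul (1/a^2))).neg
    have h0 : -((1/a) * (0:ℝ) + (1/a^2) * 0) = 0 := by ring
    rw [h0] at h
    exact h
  have hnonneg : ∀ x ∈ Set.Ioi (0:ℝ), 0 ≤ x * Real.exp (-a * x) := by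
    intro x hx
    exact mul_nonneg (le_of_lt hx) (Real.exp_pos _).le
  refine ⟨integrableOn_Ioi_deriv_of_nonneg' hderiv hnonneg htend, ?_⟩
  rw [integral_Ioi_of_hasDerivAt_of_nonneg' hderiv hnonneg htend]
  simp [hg]

open Set Filter in
lemma aux_Iic (b : ℝ) (hb : 0 < b) :
    IntegrableOn (fun x : ℝ => x * Real.exp (b * x)) (Set.Iic 0) ∧
    ∫ x in Set.Iic (0:ℝ), x * Real.exp (b * x) = -(1 / b ^ 2) := by
  obtain ⟨hi, he⟩ := aux_Ioi b hb
  have hFeq : (fun x : ℝ => x * Real.exp (b * x))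
      = fun x : ℝ => (fun y : ℝ => -(y * Real.exp (-b * y))) (-x) := by
    funext x
    simp [neg_mul_neg]
  constructor
  · have A : MeasurableEmbedding (fun x : ℝ => -x) :=
      (Homeomorph.neg ℝ).isClosedEmbedding.measurableEmbedding
    have hmap : (volume : Measure ℝ).restrict (Set.Iic (0:ℝ))
        = Measure.map (fun x : ℝ => -x) ((volume : Measure ℝ).restrict (Set.Ici 0)) := by
      conv_lhs => rw [← Measure.map_neg_eq_self (volume : Measure ℝ)]
      rw [Measure.restrict_map A.measurable measurableSet_Iic]
      congr 1
      ext x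
      simp
    rw [IntegrableOn, hmap, A.integrable_map_iff]
    have h2 : IntegrableOn (fun y : ℝ => -(y * Real.exp (-b * y))) (Set.Ici 0) := by
      rw [integrableOn_Ici_iff_integrableOn_Ioi]
      exact hi.neg
    have hco : ((fun x : ℝ => x * Real.exp (b * x)) ∘ fun x : ℝ => -x)
        = fun y : ℝ => -(y * Real.exp (-b * y)) := by
      funext y
      simp [Function.comp, mul_neg, neg_mul]
    rw [hco]
    exact h2
  · have hc := integral_comp_neg_Iic (0:ℝ) (fun y : ℝ => -(y * Real.exp (-b * y)))
    rw [hFeq, hc, neg_zero, integral_neg, he]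

/-- under the measure tilted at `w_u` (where `M(w_u) = 1/u`),
the mean step of the two-sided exponential mixture equals
`pθ₁u/(θ₁-w_u)² - (1-p)θ₂u/(θ₂+w_u)²` and is strictly positive. -/
theorem stmt_18 (p θ₁ θ₂ u w : ℝ) (hθ₁ : 0 < θ₁) (hθ₂ : 0 < θ₂)
    (hp : p ∈ Set.Ioo (0 : ℝ) 1) (hu : u ∈ Set.Ioo (0 : ℝ) 1)
    (hw₁ : max 0 ((1 - p) * θ₁ - p * θ₂) < w) (hw₂ : w < θ₁)
    (hwu : p * θ₁ / (θ₁ - w) + (1 - p) * θ₂ / (θ₂ + w) = 1 / u) :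
    (∫ x : ℝ, x * (Real.exp (w * x) *
        (if 0 ≤ x then p * θ₁ * Real.exp (-θ₁ * x)
          else (1 - p) * θ₂ * Real.exp (θ₂ * x)) * u)
      = p * θ₁ * u / (θ₁ - w) ^ 2 - (1 - p) * θ₂ * u / (θ₂ + w) ^ 2)
    ∧ 0 < p * θ₁ * u / (θ₁ - w) ^ 2 - (1 - p) * θ₂ * u / (θ₂ + w) ^ 2 := by
  obtain ⟨hp0, hp1⟩ := hp
  obtain ⟨hu0, hu1⟩ := hu
  have hw0 : 0 < w := lt_of_le_of_lt (le_max_left _ _) hw₁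
  have hw3 : (1 - p) * θ₁ - p * θ₂ < w := lt_of_le_of_lt (le_max_right _ _) hw₁
  have ha : 0 < θ₁ - w := sub_pos.mpr hw₂
  have hb : 0 < θ₂ + w := by linarith
  obtain ⟨hiA, heA⟩ := aux_Ioi (θ₁ - w) ha
  obtain ⟨hiB, heB⟩ := aux_Iic (θ₂ + w) hb
  set f : ℝ → ℝ := fun x => x * (Real.exp (w * x) *
        (if 0 ≤ x then p * θ₁ * Real.exp (-θ₁ * x)
          else (1 - p) * θ₂ * Real.exp (θ₂ * x)) * u) with hf
  have heqI : ∀ x ∈ Set.Ioi (0:ℝ),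
      f x = (p * θ₁ * u) * (x * Real.exp (-(θ₁ - w) * x)) := by
    intro x hx
    have hx0 : (0:ℝ) ≤ x := le_of_lt hx
    rw [hf]
    simp only [if_pos hx0]
    rw [show -(θ₁ - w) * x = w * x + -θ₁ * x by ring, Real.exp_add]
    ring
  have heqJ : ∀ x ∈ Set.Iic (0:ℝ),
      f x = ((1 - p) * θ₂ * u) * (x * Real.exp ((θ₂ + w) * x)) := by
    intro x hx
    rcases lt_or_eq_of_le (show x ≤ (0:ℝ) from hx) with h | h
    · rw [hf]
      simp only [if_neg (not_le.mpr h)]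
      rw [show (θ₂ + w) * x = w * x + θ₂ * x by ring, Real.exp_add]
      ring
    · subst h
      simp [hf]
  have hIntI : IntegrableOn f (Set.Ioi 0) := by
    have h2 : IntegrableOn (fun x : ℝ => (p * θ₁ * u) * (x * Real.exp (-(θ₁ - w) * x)))
        (Set.Ioi 0) := hiA.const_mul _
    exact h2.congr_fun (fun x hx => (heqI x hx).symm) measurableSet_Ioi
  have hIntJ : IntegrableOn f (Set.Iic 0) := by
    have h2 : IntegrableOn (fun x : ℝ => ((1 - p) * θ₂ * u) * (x * Real.exp ((θ₂ + w) * x)))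
        (Set.Iic 0) := hiB.const_mul _
    exact h2.congr_fun (fun x hx => (heqJ x hx).symm) measurableSet_Iic
  have hsplit := intervalIntegral.integral_Iic_add_Ioi (b := (0:ℝ)) hIntJ hIntI
  have hvI : ∫ x in Set.Ioi (0:ℝ), f x = (p * θ₁ * u) * (1 / (θ₁ - w) ^ 2) := by
    rw [setIntegral_congr_fun measurableSet_Ioi heqI, integral_const_mul, heA]
  have hvJ : ∫ x in Set.Iic (0:ℝ), f x = ((1 - p) * θ₂ * u) * (-(1 / (θ₂ + w) ^ 2)) := by
    rw [setIntegral_congr_fun measurableSet_Iic heqJ, integral_const_mul, heB]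
  constructor
  · rw [← hsplit, hvI, hvJ]
    field_simp
    ring
  · rw [sub_pos, div_lt_div_iff₀ (by positivity) (by positivity)]
    have h1 : (1 - p) * (θ₁ - w) < p * (θ₂ + w) := by nlinarith
    have h2 : θ₂ * (θ₁ - w) < θ₁ * (θ₂ + w) := by nlinarith
    calc (1 - p) * θ₂ * u * (θ₁ - w) ^ 2
        = (((1 - p) * (θ₁ - w)) * (θ₂ * (θ₁ - w))) * u := by ring
      _ < ((p * (θ₂ + w)) * (θ₂ * (θ₁ - w))) * u := by
          apply mul_lt_mul_of_pos_right _ hu0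
          exact mul_lt_mul_of_pos_right h1 (by positivity)
      _ ≤ ((p * (θ₂ + w)) * (θ₁ * (θ₂ + w))) * u := by
          apply mul_le_mul_of_nonneg_right _ hu0.le
          exact mul_le_mul_of_nonneg_left h2.le (by positivity)
      _ = p * θ₁ * u * (θ₂ + w) ^ 2 := by ring
end
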